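/- Let S be a Steiner triple system of order 21 with a colouring whose colour classes C, B, A have cardinalities |C| = 8, |B| = 7 and |A| = 6. Suppose every pair of distinct points of A lies in a block whose third point is in B. Then for every point x ∈ C, the set A ∪ {x} contains no block; consequently A ∪ {x}, B, C ∖ {x} is a colouring of S with colour classes of cardinalities 7, 7 and 7. -/
import Mathlib


/-- A Steiner triple system on point set `points` with block set `blocks`:
every block is a 3-element subset of `points`, and every pair of distinct
points lies in exactly one block. -/
def IsSTS {α : Type*} [DecidableEq α] (points : Finset α) (blocks : Finset (Finset α)) : Prop :=
  (∀ b ∈ blocks, b ⊆ points ∧ b.card = 3) ∧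
  (∀ x ∈ points, ∀ y ∈ points, x ≠ y → ∃! b, b ∈ blocks ∧ x ∈ b ∧ y ∈ b)

/-- An `ℓ`-good sequencing: a permutation (listing) of the points such that no
`ℓ` consecutive entries contain a block. -/
def IsGoodSeq {α : Type*} [DecidableEq α] (points : Finset α) (blocks : Finset (Finset α))
    (ℓ : ℕ) (L : List α) : Prop :=
  L.Nodup ∧ L.toFinset = points ∧
  ∀ i : ℕ, ∀ b ∈ blocks, ¬ b ⊆ ((L.drop i).take ℓ).toFinset

/-- A cyclic `ℓ`-good sequencing: a permutation (listing) of the points such that no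
`ℓ` cyclically consecutive entries contain a block. -/
def IsCyclicGoodSeq {α : Type*} [DecidableEq α] (points : Finset α) (blocks : Finset (Finset α))
    (ℓ : ℕ) (L : List α) : Prop :=
  L.Nodup ∧ L.toFinset = points ∧
  ∀ i : ℕ, ∀ b ∈ blocks, ¬ b ⊆ (((L ++ L).drop i).take ℓ).toFinset

/-- An independent set: a set of points containing no block. -/
def IsIndep {α : Type*} [DecidableEq α] (blocks : Finset (Finset α)) (I : Finset α) : Prop :=
  ∀ b ∈ blocks, ¬ b ⊆ I

/-- A (proper) colouring with colour set `Fin k`: no block is monochromatic,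
i.e. every colour class is an independent set. -/
def IsColouring {α : Type*} [DecidableEq α] (blocks : Finset (Finset α)) {k : ℕ}
    (χ : α → Fin k) : Prop :=
  ∀ b ∈ blocks, ∃ x ∈ b, ∃ y ∈ b, χ x ≠ χ y

/-- A colouring with three explicitly given colour classes `A`, `B`, `C`:
they partition the point set and each is independent. -/
def IsColouring3 {α : Type*} [DecidableEq α] (points : Finset α) (blocks : Finset (Finset α))
    (A B C : Finset α) : Prop :=
  A ∪ B ∪ C = points ∧ Disjoint A B ∧ Disjoint A C ∧ Disjoint B C ∧
  IsIndep blocks A ∧ IsIndep blocks B ∧ IsIndep blocks C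

theorem stmt15 {α : Type*} [DecidableEq α] (points : Finset α) (blocks : Finset (Finset α))
    (hS : IsSTS points blocks) (hv : points.card = 21)
    (A B C : Finset α) (hcol : IsColouring3 points blocks C B A)
    (hC : C.card = 8) (hB : B.card = 7) (hA : A.card = 6)
    (hpairs : ∀ x ∈ A, ∀ y ∈ A, x ≠ y →
      ∃ b ∈ blocks, x ∈ b ∧ y ∈ b ∧ ∃ z ∈ b, z ∈ B ∧ z ≠ x ∧ z ≠ y) :
    ∀ x ∈ C,
      (∀ b ∈ blocks, ¬ b ⊆ insert x A) ∧
      IsColouring3 points blocks (insert x A) B (C.erase x) ∧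
      (insert x A).card = 7 ∧ B.card = 7 ∧ (C.erase x).card = 7 := by
  obtain ⟨hunion, hCB, hCA, hBA, hiC, hiB, hiA⟩ := hcol
  obtain ⟨hblk, huniq⟩ := hS
  intro x hx
  have hxA : x ∉ A := (Finset.disjoint_left.mp hCA) hx
  have hindep : ∀ b ∈ blocks, ¬ b ⊆ insert x A := by
    intro b hb hsub
    by_cases hxb : x ∈ b
    · -- b.erase x has card 2, both elements in A
      have hcard : (b.erase x).card = 2 := by
        rw [Finset.card_erase_of_mem hxb, (hblk b hb).2]
      obtain ⟨y, z, hyz, hbe⟩ := Finset.card_eq_two.mp hcard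
      have hy : y ∈ b.erase x := by rw [hbe]; simp
      have hz : z ∈ b.erase x := by rw [hbe]; simp
      have hyA : y ∈ A := by
        rcases Finset.mem_insert.mp (hsub (Finset.mem_of_mem_erase hy)) with h | h
        · exact absurd h (Finset.ne_of_mem_erase hy)
        · exact h
      have hzA : z ∈ A := by
        rcases Finset.mem_insert.mp (hsub (Finset.mem_of_mem_erase hz)) with h | h
        · exact absurd h (Finset.ne_of_mem_erase hz)
        · exact h
      obtain ⟨b', hb', hyb', hzb', w, hwb', hwB, hwy, hwz⟩ := hpairs y hyA z hzA hyz
      have hyp : y ∈ points := by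
        rw [← hunion]; exact Finset.mem_union_right _ hyA
      have hzp : z ∈ points := by
        rw [← hunion]; exact Finset.mem_union_right _ hzA
      obtain ⟨u, hu, huu⟩ := huniq y hyp z hzp hyz
      have e1 : b' = u := huu b' ⟨hb', hyb', hzb'⟩
      have e2 : b = u := huu b ⟨hb, Finset.mem_of_mem_erase hy, Finset.mem_of_mem_erase hz⟩
      have hwb : w ∈ b := by rw [e2, ← e1]; exact hwb'
      rcases Finset.mem_insert.mp (hsub hwb) with h | h
      · exact (Finset.disjoint_right.mp hCB hwB) (h ▸ hx)
      · exact (Finset.disjoint_left.mp hBA hwB) h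
    · have : b ⊆ A := fun a ha => by
        rcases Finset.mem_insert.mp (hsub ha) with h | h
        · exact absurd (h ▸ ha) hxb
        · exact h
      exact hiA b hb this
  refine ⟨hindep, ⟨?_, ?_, ?_, ?_, hindep, hiB, fun b hb hsub => hiC b hb (hsub.trans (Finset.erase_subset _ _))⟩, ?_, hB, ?_⟩
  · rw [← hunion]
    ext a
    simp only [Finset.mem_union, Finset.mem_insert, Finset.mem_erase]
    by_cases hax : a = x <;> aesop
  · exact Finset.disjoint_insert_left.mpr ⟨Finset.disjoint_left.mp hCB hx, hBA.symm⟩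
  · exact Finset.disjoint_insert_left.mpr ⟨Finset.notMem_erase _ _, hCA.symm.mono_right (Finset.erase_subset _ _)⟩
  · exact Finset.disjoint_right.mpr fun a ha => Finset.disjoint_left.mp hCB (Finset.mem_of_mem_erase ha)
  · rw [Finset.card_insert_of_notMem hxA, hA]
  · rw [Finset.card_erase_of_mem hx, hC]
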